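/- Let t, d ∈ ℂ[[z]] be such that t² − 4d has a simple zero at z = 0. Suppose A ∈ M₂(ℂ[[z,λ]]) satisfies tr A(z,0) = t and det A(z,0) = d, and suppose R ∈ M₂(ℂ((z))[[λ]]) is invertible over ℂ((z))[[λ]] with R(z,0) ∈ M₂(ℂ[[z]]) invertible over ℂ[[z]]. If Gauge_λ(A,R) = R⁻¹AR + λR⁻¹(dR/dz) ∈ M₂(ℂ[[z,λ]]), then R ∈ M₂(ℂ[[z,λ]]) and R is invertible over ℂ[[z,λ]]. -/

import Mathlib

open PowerSeries

noncomputable section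

/-- `K = ℂ((z))`, the field of formal Laurent series. -/
abbrev K : Type := LaurentSeries ℂ

/-- The formal derivative `d/dz` on Laurent series. -/
def lD (f : K) : K where
  coeff n := ((n : ℂ) + 1) * f.coeff (n + 1)
  isPWO_support' := by
    apply Set.IsPWO.mono ((f.isPWO_support).image_of_monotone
      (f := fun m : ℤ => m - 1) (fun a b hab => by simpa using hab))
    intro n hn
    refine ⟨n + 1, ?_, by ring⟩
    intro h0
    apply hn
    simp [h0]

/-- `ℂ[[z]]` viewed as a subring of `ℂ((z))`. -/
def Oz : Subring K := (HahnSeries.ofPowerSeries ℤ ℂ).range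

/-- `h ∈ ℂ[[z]]` has a simple zero at `z = 0`. -/
def SimpleZero (h : PowerSeries ℂ) : Prop :=
  PowerSeries.coeff 0 h = 0 ∧ PowerSeries.coeff 1 h ≠ 0

/-- `K̂ = ℂ((z))[[λ]]`, formal power series in `λ` with Laurent series coefficients. -/
abbrev Khat : Type := PowerSeries K

/-- The `λ`-coefficientwise formal derivative `d/dz` on `ℂ((z))[[λ]]`. -/
def pD (F : Khat) : Khat := PowerSeries.mk fun i => lD (PowerSeries.coeff i F)

/-- `F ∈ ℂ[[z,λ]]`: every `λ`-coefficient of `F` lies in `ℂ[[z]]`. -/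
def MemOhat (F : Khat) : Prop := ∀ i, PowerSeries.coeff i F ∈ Oz

/-- The `λ`-gauge transform `Gauge_λ(A,R) = R⁻¹AR + λ·R⁻¹·(dR/dz)`. -/
def lamGauge (A R : Matrix (Fin 2) (Fin 2) Khat) : Matrix (Fin 2) (Fin 2) Khat :=
  R⁻¹ * A * R + (PowerSeries.X : Khat) • (R⁻¹ * R.map pD)

/-- The constant term in `λ`: `F(z,0)`. -/
def ev0 : Khat →+* K := PowerSeries.constantCoeff

/-- The residue of a Laurent series: the coefficient of `z⁻¹`. -/
def res (f : K) : ℂ := f.coeff (-1)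

/-- The residue of an element of `ℂ((z))[[λ]]`, an element of `ℂ[[λ]]`. -/
def resHat (F : Khat) : PowerSeries ℂ := PowerSeries.mk fun i => res (PowerSeries.coeff i F)

-- ### Part I : basics on K, lD, Oz

@[simp] lemma lD_coeff (f : K) (n : ℤ) : (lD f).coeff n = ((n : ℂ) + 1) * f.coeff (n + 1) := rfl

lemma mem_Oz_iff {f : K} : f ∈ Oz ↔ ∀ n < 0, f.coeff n = 0 := by
  constructor
  · rintro ⟨p, rfl⟩ n hn
    rw [HahnSeries.ofPowerSeries_apply, HahnSeries.embDomain_notin_range]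
    rintro ⟨m, hm⟩
    simp at hm
    omega
  · intro h
    refine ⟨PowerSeries.mk fun m => f.coeff m, ?_⟩
    ext n
    rcases le_or_gt 0 n with hn | hn
    · lift n to ℕ using hn
      rw [HahnSeries.ofPowerSeries_apply_coeff, PowerSeries.coeff_mk]
    · rw [h n hn, HahnSeries.ofPowerSeries_apply, HahnSeries.embDomain_notin_range]
      rintro ⟨m, hm⟩
      simp at hm
      omega

lemma coeff_zero_of_mem_Oz {f : K} (hf : f ∈ Oz) {n : ℤ} (hn : n < 0) : f.coeff n = 0 :=
  mem_Oz_iff.mp hf n hn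

/-- edge coefficient of a product -/
lemma mul_coeff_edge {f g : K} {a b : ℤ} (hf : ∀ n, n < a → f.coeff n = 0)
    (hg : ∀ n, n < b → g.coeff n = 0) : (f * g).coeff (a + b) = f.coeff a * g.coeff b := by
  rw [HahnSeries.coeff_mul]
  rw [Finset.sum_eq_single (a, b)]
  · intro ij hij hne
    rw [Finset.mem_addAntidiagonal] at hij
    obtain ⟨h1, h2, h3⟩ := hij
    rcases lt_or_ge ij.1 a with h | h
    · rw [hf _ h, zero_mul]
    · rcases lt_or_ge ij.2 b with h' | h'
      · rw [hg _ h', mul_zero]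
      · exfalso; apply hne
        have : ij.1 = a := by omega
        have : ij.2 = b := by omega
        exact Prod.ext ‹ij.1 = a› this
  · intro h
    rcases eq_or_ne (f.coeff a) 0 with h0 | h0
    · rw [h0, zero_mul]
    rcases eq_or_ne (g.coeff b) 0 with h1 | h1
    · rw [h1, mul_zero]
    exfalso; exact h (Finset.mem_addAntidiagonal.mpr ⟨h0, h1, rfl⟩)

lemma mul_coeff_lt {f g : K} {a b : ℤ} (hf : ∀ n, n < a → f.coeff n = 0)
    (hg : ∀ n, n < b → g.coeff n = 0) {c : ℤ} (hc : c < a + b) : (f * g).coeff c = 0 := by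
  rw [HahnSeries.coeff_mul]
  apply Finset.sum_eq_zero
  intro ij hij
  rw [Finset.mem_addAntidiagonal] at hij
  obtain ⟨h1, h2, h3⟩ := hij
  rcases lt_or_ge ij.1 a with h | h
  · rw [hf _ h, zero_mul]
  · have : ij.2 < b := by omega
    rw [hg _ this, mul_zero]

lemma oz_mul_coeff_zero {f g : K} (hf : f ∈ Oz) (hg : g ∈ Oz) :
    (f * g).coeff 0 = f.coeff 0 * g.coeff 0 := by
  have := mul_coeff_edge (a := 0) (b := 0)
    (fun n hn => coeff_zero_of_mem_Oz hf hn) (fun n hn => coeff_zero_of_mem_Oz hg hn)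
  simpa using this

/-- Euler operator: coefficientwise multiplication by n. -/
def eul (f : K) : K where
  coeff n := (n : ℂ) * f.coeff n
  isPWO_support' := f.isPWO_support.mono (fun n hn => by
    have h1 : (n : ℂ) * f.coeff n ≠ 0 := hn
    by_contra h
    rw [HahnSeries.mem_support, not_not] at h
    exact h1 (by rw [h, mul_zero]))

@[simp] lemma eul_coeff (f : K) (n : ℤ) : (eul f).coeff n = (n : ℂ) * f.coeff n := rfl

lemma eul_support_subset (f : K) : (eul f).support ⊆ f.support := fun n hn => by
  rw [HahnSeries.mem_support] at hn ⊢
  rw [eul_coeff] at hn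
  exact fun h => hn (by rw [h, mul_zero])

lemma eul_mul (f g : K) : eul (f * g) = eul f * g + f * eul g := by
  ext n
  rw [HahnSeries.coeff_add,
    HahnSeries.coeff_mul_left' f.isPWO_support (eul_support_subset f),
    HahnSeries.coeff_mul_right' g.isPWO_support (eul_support_subset g),
    eul_coeff, HahnSeries.coeff_mul, Finset.mul_sum, ← Finset.sum_add_distrib]
  apply Finset.sum_congr rfl
  intro ij hij
  rw [Finset.mem_addAntidiagonal] at hij
  have h : ((ij.1 : ℂ)) + (ij.2 : ℂ) = (n : ℂ) := by
    rw [← Int.cast_add, hij.2.2]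
  rw [eul_coeff, eul_coeff]
  linear_combination (-(f.coeff ij.1 * g.coeff ij.2)) * h

lemma lD_eq_single_mul (f : K) : lD f = HahnSeries.single (-1 : ℤ) (1 : ℂ) * eul f := by
  ext n
  have h : (HahnSeries.single (-1 : ℤ) (1 : ℂ) * eul f).coeff ((n + 1) + (-1)) =
      1 * (eul f).coeff (n + 1) := HahnSeries.coeff_single_mul_add
  simp only [add_neg_cancel_right, one_mul] at h
  rw [h, lD_coeff, eul_coeff]
  push_cast
  ring

lemma lD_add (f g : K) : lD (f + g) = lD f + lD g := by
  ext n
  simp only [lD_coeff, HahnSeries.coeff_add]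
  ring

lemma lD_mul (f g : K) : lD (f * g) = lD f * g + f * lD g := by
  simp only [lD_eq_single_mul, eul_mul]
  ring

/-- lD as an AddMonoidHom -/
def lDhom : K →+ K := AddMonoidHom.mk' lD lD_add

lemma lD_zero : lD (0 : K) = 0 := map_zero lDhom

lemma lD_one : lD (1 : K) = 0 := by
  ext n
  simp only [lD_coeff, HahnSeries.coeff_zero]
  rcases eq_or_ne (n + 1) (0 : ℤ) with h | h
  · have : ((n : ℂ) + 1) = 0 := by
      have : n = -1 := by omega
      simp [this]
    rw [this, zero_mul]
  · rw [HahnSeries.coeff_one]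
    simp [h]

lemma lD_neg (f : K) : lD (-f) = -lD f := map_neg lDhom f

lemma lD_sub (f g : K) : lD (f - g) = lD f - lD g := map_sub lDhom f g

lemma lD_mem_Oz {f : K} (hf : f ∈ Oz) : lD f ∈ Oz := by
  rw [mem_Oz_iff]
  intro n hn
  rw [lD_coeff]
  rcases eq_or_ne n (-1 : ℤ) with h | h
  · subst h; simp
  · rw [coeff_zero_of_mem_Oz hf (by omega), mul_zero]

lemma oz_unit {f : K} (hf : f ∈ Oz) (h0 : f.coeff 0 ≠ 0) : ∃ g ∈ Oz, f * g = 1 := by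
  obtain ⟨p, rfl⟩ := hf
  have hc : PowerSeries.constantCoeff (R := ℂ) p ≠ 0 := by
    intro h; apply h0
    have := HahnSeries.ofPowerSeries_apply_coeff (Γ := ℤ) p 0
    simpa [h] using this
  refine ⟨HahnSeries.ofPowerSeries ℤ ℂ p⁻¹, ⟨p⁻¹, rfl⟩, ?_⟩
  rw [← map_mul, PowerSeries.mul_inv_cancel _ hc, map_one]


-- ### Part II : the pole-killing lemma

lemma poleKill (e : K) (he : e ∈ Oz) (he0 : e.coeff 0 = 0) (hw : e.coeff 1 ≠ 0)
    (p00 p01 p10 p11 : K) (hp00 : p00 ∈ Oz) (hp01 : p01 ∈ Oz) (hp10 : p10 ∈ Oz) (hp11 : p11 ∈ Oz)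
    (htrP : (p00).coeff 0 + (p11).coeff 0 = -(e.coeff 1) / 2)
    (hdetP : (p00).coeff 0 * (p11).coeff 0 - (p01).coeff 0 * (p10).coeff 0 = 0)
    (u0 u1 : K)
    (h0 : ∃ o ∈ Oz, e * lD u0 = p00 * u0 + p01 * u1 + o)
    (h1 : ∃ o ∈ Oz, e * lD u1 = p10 * u0 + p11 * u1 + o) :
    u0 ∈ Oz ∧ u1 ∈ Oz := by
  obtain ⟨o0, ho0, heq0⟩ := h0
  obtain ⟨o1, ho1, heq1⟩ := h1
  by_contra hcon
  set Bad : Set ℤ := {n | n < 0 ∧ (u0.coeff n ≠ 0 ∨ u1.coeff n ≠ 0)} with hBad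
  have hsub : Bad ⊆ u0.support ∪ u1.support := by
    rintro n ⟨-, h | h⟩
    · exact Or.inl h
    · exact Or.inr h
  have hWF : Bad.IsWF := (u0.isWF_support.union u1.isWF_support).mono hsub
  have hne : Bad.Nonempty := by
    by_contra hemp
    rw [Set.not_nonempty_iff_eq_empty] at hemp
    apply hcon
    constructor <;> rw [mem_Oz_iff] <;> intro n hn <;> by_contra hc
    · exact Set.eq_empty_iff_forall_notMem.mp hemp n ⟨hn, Or.inl hc⟩
    · exact Set.eq_empty_iff_forall_notMem.mp hemp n ⟨hn, Or.inr hc⟩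
  set m := hWF.min hne with hm
  have hmBad : m ∈ Bad := hWF.min_mem hne
  have hmneg : m < 0 := hmBad.1
  have hlow : ∀ n, n < m → u0.coeff n = 0 ∧ u1.coeff n = 0 := by
    intro n hn
    constructor <;> by_contra hc
    · rcases lt_or_ge n 0 with h | h
      · exact hWF.not_lt_min hne (⟨h, Or.inl hc⟩ : n ∈ Bad) hn
      · omega
    · rcases lt_or_ge n 0 with h | h
      · exact hWF.not_lt_min hne (⟨h, Or.inr hc⟩ : n ∈ Bad) hn
      · omega
  -- e is supported in degrees ≥ 1
  have hesupp : ∀ n, n < 1 → e.coeff n = 0 := by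
    intro n hn
    rcases eq_or_ne n 0 with rfl | h
    · exact he0
    · exact coeff_zero_of_mem_Oz he (by omega)
  -- key coefficient extraction at degree m
  have key : ∀ (p q : K) (u v : K) (o : K), p ∈ Oz → q ∈ Oz → o ∈ Oz →
      (e * lD u = p * u0 + q * u1 + o) →
      (∀ n, n < m → u.coeff n = 0) →
      e.coeff 1 * ((m : ℂ) * u.coeff m) = p.coeff 0 * u0.coeff m + q.coeff 0 * u1.coeff m := by
    intro p q u v o hp hq ho heq hu
    have hLD : ∀ n, n < m - 1 → (lD u).coeff n = 0 := by
      intro n hn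
      rw [lD_coeff, hu (n+1) (by omega), mul_zero]
    have hL : (e * lD u).coeff m = e.coeff 1 * (lD u).coeff (m - 1) := by
      have := mul_coeff_edge (a := (1:ℤ)) (b := m - 1) hesupp hLD
      rw [show (1 : ℤ) + (m - 1) = m by ring] at this
      exact this
    have hR0 : (p * u0).coeff m = p.coeff 0 * u0.coeff m := by
      have := mul_coeff_edge (a := (0:ℤ)) (b := m)
        (fun n hn => coeff_zero_of_mem_Oz hp hn) (fun n hn => (hlow n hn).1)
      rwa [zero_add] at this
    have hR1 : (q * u1).coeff m = q.coeff 0 * u1.coeff m := by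
      have := mul_coeff_edge (a := (0:ℤ)) (b := m)
        (fun n hn => coeff_zero_of_mem_Oz hq hn) (fun n hn => (hlow n hn).2)
      rwa [zero_add] at this
    have ho' : o.coeff m = 0 := coeff_zero_of_mem_Oz ho hmneg
    have := congrArg (fun f : K => f.coeff m) heq
    simp only [HahnSeries.coeff_add] at this
    rw [hL, hR0, hR1, ho', add_zero] at this
    rw [← this, lD_coeff, show m - 1 + 1 = m by ring]
    push_cast
    ring
  have E0 := key p00 p01 u0 u0 o0 hp00 hp01 ho0 heq0 (fun n hn => (hlow n hn).1)
  have E1 := key p10 p11 u1 u1 o1 hp10 hp11 ho1 heq1 (fun n hn => (hlow n hn).2)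
  set w := e.coeff 1
  set U0 := u0.coeff m
  set U1 := u1.coeff m
  set a := p00.coeff 0
  set b := p01.coeff 0
  set c := p10.coeff 0
  set dd := p11.coeff 0
  have hmC : (m : ℂ) ≠ 0 := Int.cast_ne_zero.mpr (by omega)
  have hmC2 : (m : ℂ) + 1/2 ≠ 0 := by
    intro h
    have h2 : (2 * m + 1 : ℂ) = 0 := by linear_combination 2 * h
    have : ((2 * m + 1 : ℤ) : ℂ) = 0 := by push_cast; linear_combination h2
    have := Int.cast_injective (α := ℂ) (this.trans (Int.cast_zero).symm)
    omega
  have hd : w^2 * (m : ℂ) * ((m : ℂ) + 1/2) ≠ 0 :=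
    mul_ne_zero (mul_ne_zero (pow_ne_zero 2 hw) hmC) hmC2
  have hU0 : U0 = 0 := by
    have hkey : (w^2 * (m : ℂ) * ((m : ℂ) + 1/2)) * U0 = 0 := by
      linear_combination (w * (m:ℂ) - dd) * E0 + b * E1 + (w * (m:ℂ)) * U0 * htrP - U0 * hdetP
    exact (mul_eq_zero.mp hkey).resolve_left hd
  have hU1 : U1 = 0 := by
    have hkey : (w^2 * (m : ℂ) * ((m : ℂ) + 1/2)) * U1 = 0 := by
      linear_combination (w * (m:ℂ) - a) * E1 + c * E0 + (w * (m:ℂ)) * U1 * htrP - U1 * hdetP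
    exact (mul_eq_zero.mp hkey).resolve_left hd
  rcases hmBad.2 with h | h
  · exact h hU0
  · exact h hU1

-- ### Part III : companion form

def Nmat (T D : K) : Matrix (Fin 2) (Fin 2) K := !![0, -D; 1, T]

lemma matOz_mul {P Q : Matrix (Fin 2) (Fin 2) K} (hP : ∀ i j, P i j ∈ Oz)
    (hQ : ∀ i j, Q i j ∈ Oz) : ∀ i j, (P * Q) i j ∈ Oz := by
  intro i j
  rw [Matrix.mul_apply]
  exact sum_mem (fun k _ => mul_mem (hP i k) (hQ k j))

lemma Nmat_mem_Oz {T D : K} (hT : T ∈ Oz) (hD : D ∈ Oz) : ∀ i j, Nmat T D i j ∈ Oz := by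
  intro i j
  fin_cases i <;> fin_cases j <;> simp [Nmat] <;>
    first
    | exact zero_mem Oz
    | exact neg_mem hD
    | exact hD
    | exact one_mem Oz
    | exact hT

lemma companion_of_vector (M : Matrix (Fin 2) (Fin 2) K) (hM : ∀ i j, M i j ∈ Oz)
    (v0 v1 : K) (hv0 : v0 ∈ Oz) (hv1 : v1 ∈ Oz)
    (hΔ : (M 1 0 * v0 * v0 + (M 1 1 - M 0 0) * v0 * v1 - M 0 1 * v1 * v1).coeff 0 ≠ 0) :
    ∃ G Gi : Matrix (Fin 2) (Fin 2) K, (∀ i j, G i j ∈ Oz) ∧ (∀ i j, Gi i j ∈ Oz) ∧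
      G * Gi = 1 ∧ Gi * G = 1 ∧ M * G = G * Nmat M.trace M.det := by
  have ha := hM 0 0
  have hb := hM 0 1
  have hc := hM 1 0
  have he := hM 1 1
  have hΔOz : M 1 0 * v0 * v0 + (M 1 1 - M 0 0) * v0 * v1 - M 0 1 * v1 * v1 ∈ Oz := by
    refine sub_mem (add_mem (mul_mem (mul_mem hc hv0) hv0)
      (mul_mem (mul_mem (sub_mem he ha) hv0) hv1)) (mul_mem (mul_mem hb hv1) hv1)
  obtain ⟨gv, hgvOz, hgv⟩ := oz_unit hΔOz hΔ
  have hg1 : M 0 0 * v0 + M 0 1 * v1 ∈ Oz := add_mem (mul_mem ha hv0) (mul_mem hb hv1)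
  have hg2 : M 1 0 * v0 + M 1 1 * v1 ∈ Oz := add_mem (mul_mem hc hv0) (mul_mem he hv1)
  refine ⟨!![v0, M 0 0 * v0 + M 0 1 * v1; v1, M 1 0 * v0 + M 1 1 * v1],
    !![gv * (M 1 0 * v0 + M 1 1 * v1), -(gv * (M 0 0 * v0 + M 0 1 * v1));
       -(gv * v1), gv * v0], ?_, ?_, ?_, ?_, ?_⟩
  · intro i j
    fin_cases i <;> fin_cases j <;> simp <;>
      first
      | exact hv0
      | exact hg1
      | exact hv1
      | exact hg2
  · intro i j
    fin_cases i <;> fin_cases j <;> simp <;>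
      first
      | exact mul_mem hgvOz hg2
      | exact neg_mem (mul_mem hgvOz hg1)
      | exact mul_mem hgvOz hg1
      | exact neg_mem (mul_mem hgvOz hv1)
      | exact mul_mem hgvOz hv1
      | exact mul_mem hgvOz hv0
  · rw [← Matrix.ext_iff]
    intro i j
    fin_cases i <;> fin_cases j <;>
      simp [Matrix.mul_apply, Fin.sum_univ_two, Matrix.one_apply] <;>
      first
      | linear_combination hgv
      | linear_combination -hgv
      | ring
  · rw [← Matrix.ext_iff]
    intro i j
    fin_cases i <;> fin_cases j <;>
      simp [Matrix.mul_apply, Fin.sum_univ_two, Matrix.one_apply] <;>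
      first
      | linear_combination hgv
      | linear_combination -hgv
      | ring
  · have htr : M.trace = M 0 0 + M 1 1 := Matrix.trace_fin_two M
    have hdet : M.det = M 0 0 * M 1 1 - M 0 1 * M 1 0 := Matrix.det_fin_two M
    rw [← Matrix.ext_iff]
    intro i j
    fin_cases i <;> fin_cases j <;>
      simp [Matrix.mul_apply, Fin.sum_univ_two, Nmat, htr, hdet] <;>
      ring

lemma companionize (M : Matrix (Fin 2) (Fin 2) K) (hM : ∀ i j, M i j ∈ Oz)
    (hE1 : (M.trace * M.trace - 4 * M.det).coeff 1 ≠ 0) :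
    ∃ G Gi : Matrix (Fin 2) (Fin 2) K, (∀ i j, G i j ∈ Oz) ∧ (∀ i j, Gi i j ∈ Oz) ∧
      G * Gi = 1 ∧ Gi * G = 1 ∧ M * G = G * Nmat M.trace M.det := by
  have ha := hM 0 0
  have hb := hM 0 1
  have hc := hM 1 0
  have he := hM 1 1
  by_cases hcc : (M 1 0).coeff 0 ≠ 0
  · apply companion_of_vector M hM 1 0 (one_mem Oz) (zero_mem Oz)
    have : M 1 0 * 1 * 1 + (M 1 1 - M 0 0) * 1 * 0 - M 0 1 * 0 * 0 = M 1 0 := by ring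
    rw [this]
    exact hcc
  · by_cases hbb : (M 0 1).coeff 0 ≠ 0
    · apply companion_of_vector M hM 0 1 (zero_mem Oz) (one_mem Oz)
      have : M 1 0 * 0 * 0 + (M 1 1 - M 0 0) * 0 * 1 - M 0 1 * 1 * 1 = -(M 0 1) := by ring
      rw [this, HahnSeries.coeff_neg]
      exact neg_ne_zero.mpr hbb
    · push_neg at hcc hbb
      apply companion_of_vector M hM 1 1 (one_mem Oz) (one_mem Oz)
      have hid : M 1 0 * 1 * 1 + (M 1 1 - M 0 0) * 1 * 1 - M 0 1 * 1 * 1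
          = M 1 0 + (M 1 1 - M 0 0) - M 0 1 := by ring
      rw [hid]
      intro hzero
      -- then M mod z is scalar, contradicting the simple zero of the discriminant
      have hae : (M 1 1 - M 0 0).coeff 0 = 0 := by
        have : (M 1 0 + (M 1 1 - M 0 0) - M 0 1).coeff 0
            = (M 1 0).coeff 0 + (M 1 1 - M 0 0).coeff 0 - (M 0 1).coeff 0 := by
          simp [HahnSeries.coeff_sub, HahnSeries.coeff_add]
        rw [this, hcc, hbb] at hzero
        linear_combination hzero
      apply hE1
      have hEid : M.trace * M.trace - 4 * M.det
          = (M 1 1 - M 0 0) * (M 1 1 - M 0 0) + ((M 0 1 * M 1 0) + (M 0 1 * M 1 0)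
            + (M 0 1 * M 1 0) + (M 0 1 * M 1 0)) := by
        rw [Matrix.trace_fin_two, Matrix.det_fin_two]
        ring
      have hsupp_ae : ∀ n : ℤ, n < 1 → (M 1 1 - M 0 0).coeff n = 0 := by
        intro n hn
        rcases eq_or_ne n 0 with rfl | h
        · exact hae
        · exact coeff_zero_of_mem_Oz (sub_mem he ha) (by omega)
      have hsupp_b : ∀ n : ℤ, n < 1 → (M 0 1).coeff n = 0 := by
        intro n hn
        rcases eq_or_ne n 0 with rfl | h
        · exact hbb
        · exact coeff_zero_of_mem_Oz hb (by omega)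
      have hsupp_c : ∀ n : ℤ, n < 1 → (M 1 0).coeff n = 0 := by
        intro n hn
        rcases eq_or_ne n 0 with rfl | h
        · exact hcc
        · exact coeff_zero_of_mem_Oz hc (by omega)
      have h1 : ((M 1 1 - M 0 0) * (M 1 1 - M 0 0)).coeff 1 = 0 :=
        mul_coeff_lt hsupp_ae hsupp_ae (by norm_num)
      have h2 : ((M 0 1) * (M 1 0)).coeff 1 = 0 :=
        mul_coeff_lt hsupp_b hsupp_c (by norm_num)
      rw [hEid]
      simp [HahnSeries.coeff_add, h1, h2]

-- ### Part IV : Khat infrastructure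

lemma pD_coeff (F : Khat) (i : ℕ) : PowerSeries.coeff (R := K) i (pD F) = lD (PowerSeries.coeff (R := K) i F) :=
  PowerSeries.coeff_mk _ _

lemma pD_add (F G : Khat) : pD (F + G) = pD F + pD G := by
  ext n
  rw [map_add, pD_coeff, pD_coeff, pD_coeff, map_add, lD_add]

def pDhom : Khat →+ Khat := AddMonoidHom.mk' pD pD_add

lemma pD_mul (F G : Khat) : pD (F * G) = pD F * G + F * pD G := by
  apply PowerSeries.ext
  intro n
  rw [map_add, pD_coeff, PowerSeries.coeff_mul, PowerSeries.coeff_mul, PowerSeries.coeff_mul]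
  have hsum : lD (∑ p ∈ Finset.HasAntidiagonal.antidiagonal n,
        PowerSeries.coeff (R := K) p.1 F * PowerSeries.coeff (R := K) p.2 G)
      = ∑ p ∈ Finset.HasAntidiagonal.antidiagonal n,
        lD (PowerSeries.coeff (R := K) p.1 F * PowerSeries.coeff (R := K) p.2 G) :=
    map_sum lDhom _ _
  rw [hsum, ← Finset.sum_add_distrib]
  apply Finset.sum_congr rfl
  intro ij _
  show lD (_ * _) = _
  rw [lD_mul, pD_coeff, pD_coeff]

lemma pD_one : pD (1 : Khat) = 0 := by
  ext n
  rw [pD_coeff, map_zero]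
  rcases eq_or_ne n 0 with rfl | h
  · rw [PowerSeries.coeff_zero_eq_constantCoeff, map_one, lD_one]
  · rw [PowerSeries.coeff_one, if_neg h, lD_zero]

-- matrices over Khat
abbrev Mhat := Matrix (Fin 2) (Fin 2) Khat
abbrev MK := Matrix (Fin 2) (Fin 2) K

def mpD (P : Mhat) : Mhat := P.map pD

lemma mpD_mul (P Q : Mhat) : mpD (P * Q) = mpD P * Q + P * mpD Q := by
  rw [← Matrix.ext_iff]
  intro i j
  simp only [mpD, Matrix.map_apply, Matrix.add_apply, Matrix.mul_apply, Fin.sum_univ_two]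
  rw [show P i 0 * Q 0 j + P i 1 * Q 1 j = (P i 0 * Q 0 j) + (P i 1 * Q 1 j) from rfl]
  rw [pD_add, pD_mul, pD_mul]
  ring

lemma mpD_one : mpD (1 : Mhat) = 0 := by
  rw [← Matrix.ext_iff]
  intro i j
  simp only [mpD, Matrix.map_apply, Matrix.zero_apply, Matrix.one_apply]
  split_ifs with h
  · exact pD_one
  · show pD 0 = 0
    exact map_zero pDhom

/-- entrywise λ-coefficient of a matrix -/
def cM (n : ℕ) (P : Mhat) : MK := P.map (PowerSeries.coeff (R := K) n)

lemma cM_apply (n : ℕ) (P : Mhat) (i j : Fin 2) : cM n P i j = PowerSeries.coeff (R := K) n (P i j) := rfl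

lemma cM_add (n : ℕ) (P Q : Mhat) : cM n (P + Q) = cM n P + cM n Q := by
  rw [← Matrix.ext_iff]; intro i j
  simp [cM_apply, Matrix.add_apply]

lemma cM_sub (n : ℕ) (P Q : Mhat) : cM n (P - Q) = cM n P - cM n Q := by
  rw [← Matrix.ext_iff]; intro i j
  simp [cM_apply, Matrix.sub_apply]

lemma cM_mul (n : ℕ) (P Q : Mhat) :
    cM n (P * Q) = ∑ ij ∈ Finset.HasAntidiagonal.antidiagonal n, cM ij.1 P * cM ij.2 Q := by
  rw [← Matrix.ext_iff]; intro i j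
  rw [Matrix.sum_apply]
  rw [cM_apply, Matrix.mul_apply, Fin.sum_univ_two, map_add, PowerSeries.coeff_mul,
    PowerSeries.coeff_mul, ← Finset.sum_add_distrib]
  apply Finset.sum_congr rfl
  intro ij _
  rw [Matrix.mul_apply, Fin.sum_univ_two]
  rfl

lemma cM_smulX (n : ℕ) (P : Mhat) :
    cM (n + 1) ((PowerSeries.X : Khat) • P) = cM n P := by
  rw [← Matrix.ext_iff]; intro i j
  rw [cM_apply, cM_apply, Matrix.smul_apply, smul_eq_mul, PowerSeries.coeff_succ_X_mul]

lemma cM_smulX_zero (P : Mhat) : cM 0 ((PowerSeries.X : Khat) • P) = 0 := by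
  rw [← Matrix.ext_iff]; intro i j
  rw [cM_apply, Matrix.smul_apply, smul_eq_mul, PowerSeries.coeff_zero_eq_constantCoeff]
  simp

lemma cM_mpD (n : ℕ) (P : Mhat) : cM n (mpD P) = (cM n P).map lD := by
  rw [← Matrix.ext_iff]; intro i j
  rw [cM_apply, Matrix.map_apply, cM_apply, mpD, Matrix.map_apply, pD_coeff]

-- constants in λ
def CM (P : MK) : Mhat := P.map (PowerSeries.C (R := K))

lemma CM_mul (P Q : MK) : CM (P * Q) = CM P * CM Q := by
  rw [← Matrix.ext_iff]; intro i j
  simp only [CM, Matrix.map_apply, Matrix.mul_apply, Fin.sum_univ_two, map_add, map_mul]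

lemma CM_one : CM (1 : MK) = 1 := by
  rw [← Matrix.ext_iff]; intro i j
  simp only [CM, Matrix.map_apply, Matrix.one_apply]
  split_ifs <;> simp

lemma cM_CM_zero (P : MK) : cM 0 (CM P) = P := by
  rw [← Matrix.ext_iff]; intro i j
  rw [cM_apply, CM, Matrix.map_apply, PowerSeries.coeff_zero_eq_constantCoeff,
    PowerSeries.constantCoeff_C]

lemma cM_CM_succ (P : MK) (n : ℕ) : cM (n + 1) (CM P) = 0 := by
  rw [← Matrix.ext_iff]; intro i j
  rw [cM_apply, CM, Matrix.map_apply, PowerSeries.coeff_C, if_neg (Nat.succ_ne_zero n)]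
  rfl

lemma mpD_CM (P : MK) : mpD (CM P) = CM (P.map lD) := by
  rw [← Matrix.ext_iff]; intro i j
  show pD (PowerSeries.C (R := K) (P i j)) = PowerSeries.C (R := K) (lD (P i j))
  apply PowerSeries.ext
  intro n
  rw [pD_coeff, PowerSeries.coeff_C, PowerSeries.coeff_C]
  split_ifs with h
  · rfl
  · exact lD_zero

-- MemOhat closure
lemma memOhat_add {f g : Khat} (hf : MemOhat f) (hg : MemOhat g) : MemOhat (f + g) := by
  intro i; rw [map_add]; exact add_mem (hf i) (hg i)

lemma memOhat_neg {f : Khat} (hf : MemOhat f) : MemOhat (-f) := by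
  intro i; rw [map_neg]; exact neg_mem (hf i)

lemma memOhat_sub {f g : Khat} (hf : MemOhat f) (hg : MemOhat g) : MemOhat (f - g) := by
  intro i; rw [map_sub]; exact sub_mem (hf i) (hg i)

lemma memOhat_mul {f g : Khat} (hf : MemOhat f) (hg : MemOhat g) : MemOhat (f * g) := by
  intro i
  rw [PowerSeries.coeff_mul]
  exact sum_mem (fun ij _ => mul_mem (hf ij.1) (hg ij.2))

lemma memOhat_C {k : K} (hk : k ∈ Oz) : MemOhat (PowerSeries.C (R := K) k) := by
  intro i
  rw [PowerSeries.coeff_C]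
  split_ifs
  · exact hk
  · exact zero_mem Oz

lemma memOhat_Xmul {f : Khat} (hf : MemOhat f) : MemOhat ((PowerSeries.X : Khat) * f) := by
  intro i
  rcases i with _ | i
  · rw [PowerSeries.coeff_zero_eq_constantCoeff]
    simp
  · rw [PowerSeries.coeff_succ_X_mul]
    exact hf i

def MOh (P : Mhat) : Prop := ∀ i j, MemOhat (P i j)

lemma MOh_mul {P Q : Mhat} (hP : MOh P) (hQ : MOh Q) : MOh (P * Q) := by
  intro i j
  rw [Matrix.mul_apply, Fin.sum_univ_two]
  exact memOhat_add (memOhat_mul (hP i 0) (hQ 0 j)) (memOhat_mul (hP i 1) (hQ 1 j))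

lemma MOh_add {P Q : Mhat} (hP : MOh P) (hQ : MOh Q) : MOh (P + Q) := fun i j =>
  memOhat_add (hP i j) (hQ i j)

lemma MOh_sub {P Q : Mhat} (hP : MOh P) (hQ : MOh Q) : MOh (P - Q) := fun i j =>
  memOhat_sub (hP i j) (hQ i j)

lemma MOh_smulX {P : Mhat} (hP : MOh P) : MOh ((PowerSeries.X : Khat) • P) := by
  intro i j
  rw [Matrix.smul_apply, smul_eq_mul]
  exact memOhat_Xmul (hP i j)

lemma MOh_CM {P : MK} (hP : ∀ i j, P i j ∈ Oz) : MOh (CM P) := fun i j =>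
  memOhat_C (hP i j)

lemma MOh_cM {P : Mhat} (hP : MOh P) (n : ℕ) : ∀ i j, cM n P i j ∈ Oz := fun i j => hP i j n

-- inverse of a power series with Oz coefficients
lemma memOhat_inv {f g : Khat} (hf : MemOhat f) (hfg : f * g = 1)
    {g0 : K} (hg0 : g0 ∈ Oz) (h0 : g0 * PowerSeries.constantCoeff (R := K) f = 1) : MemOhat g := by
  intro n
  induction n using Nat.strong_induction_on with
  | _ n IH =>
    have hco := congrArg (PowerSeries.coeff (R := K) n) hfg
    rw [PowerSeries.coeff_mul, Finset.Nat.sum_antidiagonal_eq_sum_range_succ_mk,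
      Finset.sum_range_succ'] at hco
    simp only [Nat.sub_zero] at hco
    -- hco : ∑ k in range n, coeff (k+1) f * coeff (n-(k+1)) g + coeff 0 f * coeff n g = coeff n 1
    have key : PowerSeries.coeff (R := K) n g
        = g0 * (PowerSeries.coeff (R := K) n (1 : Khat))
          - g0 * (∑ k ∈ Finset.range n,
              PowerSeries.coeff (R := K) (k + 1) f * PowerSeries.coeff (R := K) (n - (k + 1)) g) := by
      have h1 : g0 * (PowerSeries.coeff (R := K) 0 f * PowerSeries.coeff (R := K) n g)
          = PowerSeries.coeff (R := K) n g := by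
        rw [PowerSeries.coeff_zero_eq_constantCoeff, ← mul_assoc, h0, one_mul]
      calc PowerSeries.coeff (R := K) n g
          = g0 * (PowerSeries.coeff (R := K) 0 f * PowerSeries.coeff (R := K) n g) := h1.symm
        _ = g0 * (PowerSeries.coeff (R := K) n (1 : Khat))
            - g0 * (∑ k ∈ Finset.range n,
              PowerSeries.coeff (R := K) (k + 1) f * PowerSeries.coeff (R := K) (n - (k + 1)) g) := by
            rw [← hco]; ring
    rw [key]
    refine sub_mem (mul_mem hg0 ?_) (mul_mem hg0 (sum_mem fun k hk => ?_))
    · rcases eq_or_ne n 0 with rfl | h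
      · rw [PowerSeries.coeff_zero_eq_constantCoeff, map_one]; exact one_mem Oz
      · rw [PowerSeries.coeff_one, if_neg h]; exact zero_mem Oz
    · have hk' : n - (k + 1) < n := by
        have := Finset.mem_range.mp hk
        omega
      exact mul_mem (hf (k + 1)) (IH _ hk')

-- ### Part V-a : the main induction

lemma mainInduction (T D : K) (hTOz : T ∈ Oz) (hDOz : D ∈ Oz)
    (hE0 : (T * T - (D + D + D + D)).coeff 0 = 0)
    (hE1 : (T * T - (D + D + D + D)).coeff 1 ≠ 0)
    (At Bt S : Mhat) (hAt : MOh At) (hBt : MOh Bt)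
    (hAt0 : cM 0 At = Nmat T D) (hBt0 : cM 0 Bt = Nmat T D)
    (hS0 : ∀ i j, cM 0 S i j ∈ Oz)
    (hEq : ∀ n : ℕ, (cM n S).map lD
      = (∑ ij ∈ Finset.HasAntidiagonal.antidiagonal (n + 1), cM ij.1 S * cM ij.2 Bt)
        - (∑ ij ∈ Finset.HasAntidiagonal.antidiagonal (n + 1), cM ij.1 At * cM ij.2 S)) :
    ∀ n i j, cM n S i j ∈ Oz := by
  intro n
  induction n using Nat.strong_induction_on with
  | _ n IH =>
  match n, IH with
  | 0, _ => exact hS0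
  | (n + 1), IH =>
  have IH' : ∀ m, m ≤ n → ∀ i j, cM m S i j ∈ Oz := fun m hm => IH m (by omega)
  -- notation
  set NN := Nmat T D with hNNdef
  have hNN00 : NN 0 0 = 0 := rfl
  have hNN01 : NN 0 1 = -D := rfl
  have hNN10 : NN 1 0 = 1 := rfl
  have hNN11 : NN 1 1 = T := rfl
  -- Step A : the commutator fact at level n+1
  have hcomm : ∀ i j, (cM (n+1) S * NN - NN * cM (n+1) S) i j ∈ Oz := by
    have h1 : ∑ ij ∈ Finset.HasAntidiagonal.antidiagonal (n+1), cM ij.1 S * cM ij.2 Bt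
        = (∑ k ∈ Finset.range (n+1), cM k S * cM (n+1-k) Bt) + cM (n+1) S * NN := by
      rw [Finset.Nat.sum_antidiagonal_eq_sum_range_succ_mk, Finset.sum_range_succ,
        Nat.sub_self, hBt0]
    have h2 : ∑ ij ∈ Finset.HasAntidiagonal.antidiagonal (n+1), cM ij.1 At * cM ij.2 S
        = (∑ k ∈ Finset.range (n+1), cM (k+1) At * cM (n-k) S) + NN * cM (n+1) S := by
      rw [Finset.Nat.sum_antidiagonal_eq_sum_range_succ_mk, Finset.sum_range_succ',
        Nat.sub_zero, hAt0]
      congr 1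
      apply Finset.sum_congr rfl
      intro k hk
      have e : n + 1 - (k + 1) = n - k := by omega
      rw [e]
    have heqn := hEq n
    rw [h1, h2] at heqn
    have hre : cM (n+1) S * NN - NN * cM (n+1) S
        = (cM n S).map lD
          - (∑ k ∈ Finset.range (n+1), cM k S * cM (n+1-k) Bt)
          + (∑ k ∈ Finset.range (n+1), cM (k+1) At * cM (n-k) S) := by
      rw [heqn]; abel
    intro i j
    rw [hre, Matrix.add_apply, Matrix.sub_apply, Matrix.map_apply,
      Matrix.sum_apply, Matrix.sum_apply]
    refine add_mem (sub_mem (lD_mem_Oz (IH' n le_rfl i j)) (sum_mem fun k hk => ?_))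
      (sum_mem fun k hk => ?_)
    · exact matOz_mul (IH' k (by have := Finset.mem_range.mp hk; omega)) (MOh_cM hBt _) i j
    · exact matOz_mul (MOh_cM hAt _) (IH' (n-k) (by omega)) i j
  -- Step B : scalar entries
  set α := cM (n+1) S 0 0 with hαdef
  set β := cM (n+1) S 1 0 with hβdef
  have hαβ : ∃ w01 w11, w01 ∈ Oz ∧ w11 ∈ Oz ∧
      cM (n+1) S 0 1 = -(D * β) + w01 ∧ cM (n+1) S 1 1 = α + T * β + w11 := by
    refine ⟨cM (n+1) S 0 1 + D * β, cM (n+1) S 1 1 - α - T * β, ?_, ?_, by ring, by ring⟩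
    · have h := hcomm 0 0
      have e : (cM (n+1) S * NN - NN * cM (n+1) S) 0 0
          = cM (n+1) S 0 1 + D * β := by
        simp only [Matrix.sub_apply, Matrix.mul_apply, Fin.sum_univ_two,
          hNN00, hNN01, hNN10, hNN11]
        ring
      rwa [e] at h
    · have h := hcomm 1 0
      have e : (cM (n+1) S * NN - NN * cM (n+1) S) 1 0
          = cM (n+1) S 1 1 - α - T * β := by
        simp only [Matrix.sub_apply, Matrix.mul_apply, Fin.sum_univ_two,
          hNN00, hNN01, hNN10, hNN11]
        ring
      rwa [e] at h
  obtain ⟨w01, w11, hw01Oz, hw11Oz, hs01, hs11⟩ := hαβ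
  -- Step C : main fact from the equation at level n+2
  have hmain : ∀ i j, ((cM (n+1) S).map lD
      - (cM (n+1) S * cM 1 Bt - cM 1 At * cM (n+1) S)
      - (cM (n+2) S * NN - NN * cM (n+2) S)) i j ∈ Oz := by
    have h1 : ∑ ij ∈ Finset.HasAntidiagonal.antidiagonal (n+2), cM ij.1 S * cM ij.2 Bt
        = ((∑ k ∈ Finset.range (n+1), cM k S * cM (n+2-k) Bt) + cM (n+1) S * cM 1 Bt)
          + cM (n+2) S * NN := by
      rw [Finset.Nat.sum_antidiagonal_eq_sum_range_succ_mk, Finset.sum_range_succ,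
        Nat.sub_self, hBt0, Finset.sum_range_succ, show n+2-(n+1) = 1 by omega]
    have h2 : ∑ ij ∈ Finset.HasAntidiagonal.antidiagonal (n+2), cM ij.1 At * cM ij.2 S
        = ((∑ k ∈ Finset.range (n+1), cM (k+2) At * cM (n-k) S) + cM 1 At * cM (n+1) S)
          + NN * cM (n+2) S := by
      rw [Finset.Nat.sum_antidiagonal_eq_sum_range_succ_mk, Finset.sum_range_succ',
        Nat.sub_zero, hAt0, Finset.sum_range_succ']
      have e3 : (∑ k ∈ Finset.range (n+1),
            cM (k + 1 + 1, n + 2 - (k + 1 + 1)).1 At * cM (k + 1 + 1, n + 2 - (k + 1 + 1)).2 S)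
          = ∑ k ∈ Finset.range (n+1), cM (k+2) At * cM (n-k) S := by
        apply Finset.sum_congr rfl
        intro k hk
        show cM (k+2) At * cM (n + 2 - (k + 1 + 1)) S = _
        have e2 : n + 2 - (k + 1 + 1) = n - k := by omega
        rw [e2]
      rw [e3]
      rfl
    have heqn := hEq (n+1)
    rw [show n+1+1 = n+2 from rfl, h1, h2] at heqn
    have hre : (cM (n+1) S).map lD
        - (cM (n+1) S * cM 1 Bt - cM 1 At * cM (n+1) S)
        - (cM (n+2) S * NN - NN * cM (n+2) S)
        = (∑ k ∈ Finset.range (n+1), cM k S * cM (n+2-k) Bt)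
          - (∑ k ∈ Finset.range (n+1), cM (k+2) At * cM (n-k) S) := by
      rw [heqn]; abel
    intro i j
    rw [hre, Matrix.sub_apply, Matrix.sum_apply, Matrix.sum_apply]
    refine sub_mem (sum_mem fun k hk => ?_) (sum_mem fun k hk => ?_)
    · exact matOz_mul (IH' k (by have := Finset.mem_range.mp hk; omega)) (MOh_cM hBt _) i j
    · exact matOz_mul (MOh_cM hAt _) (IH' (n-k) (by omega)) i j
  -- Step D : scalar extraction
  set b1 := cM 1 Bt with hb1def
  set a1 := cM 1 At with ha1def
  have hb1Oz : ∀ i j, b1 i j ∈ Oz := MOh_cM hBt 1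
  have ha1Oz : ∀ i j, a1 i j ∈ Oz := MOh_cM hAt 1
  set M := (cM (n+1) S).map lD - (cM (n+1) S * b1 - a1 * cM (n+1) S)
      - (cM (n+2) S * NN - NN * cM (n+2) S) with hMdef
  set τ := (b1 0 0 - a1 0 0) + (b1 1 1 - a1 1 1) with hτdef
  set ν := -(D * (b1 1 0 - a1 1 0)) + (b1 0 1 - a1 0 1) + T * (b1 1 1 - a1 1 1) with hνdef
  have hτOz : τ ∈ Oz := by
    rw [hτdef]
    exact add_mem (sub_mem (hb1Oz 0 0) (ha1Oz 0 0)) (sub_mem (hb1Oz 1 1) (ha1Oz 1 1))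
  have hνOz : ν ∈ Oz := by
    rw [hνdef]
    exact add_mem (add_mem (neg_mem (mul_mem hDOz (sub_mem (hb1Oz 1 0) (ha1Oz 1 0))))
      (sub_mem (hb1Oz 0 1) (ha1Oz 0 1))) (mul_mem hTOz (sub_mem (hb1Oz 1 1) (ha1Oz 1 1)))
  -- lD facts
  have hlds01 : lD (cM (n+1) S 0 1) = -(lD D * β + D * lD β) + lD w01 := by
    rw [hs01, lD_add, lD_neg, lD_mul]
  have hlds11 : lD (cM (n+1) S 1 1) = lD α + (lD T * β + T * lD β) + lD w11 := by
    rw [hs11, lD_add, lD_add, lD_mul]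
  -- the two scalar congruences
  have hid1 : 2 * lD α + T * lD β - τ * α - (ν - lD T) * β
      = (M 0 0 + M 1 1) - lD w11
        + (w11 * (b1 1 1 - a1 1 1) + w01 * (b1 1 0 - a1 1 0)) := by
    rw [hMdef]
    simp only [Matrix.sub_apply, Matrix.map_apply, Matrix.mul_apply, Fin.sum_univ_two,
      hNN00, hNN01, hNN10, hNN11]
    rw [hlds11, hs01, hs11, hτdef, hνdef, ← hαdef, ← hβdef]
    ring
  have hid2 : T * lD α + (T * T - (D + D)) * lD β - ν * α
        - ((T * ν - D * τ) - T * lD T + lD D) * β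
      = (-(D * M 1 0) + M 0 1 + T * M 1 1) - lD w01 - T * lD w11
        + (-(D * (w11 * b1 1 0)) + w01 * b1 1 1 - a1 0 0 * w01 - a1 0 1 * w11
          + T * (w11 * b1 1 1 - a1 1 0 * w01 - a1 1 1 * w11)) := by
    rw [hMdef]
    simp only [Matrix.sub_apply, Matrix.map_apply, Matrix.mul_apply, Fin.sum_univ_two,
      hNN00, hNN01, hNN10, hNN11]
    rw [hlds01, hlds11, hs01, hs11, hτdef, hνdef, ← hαdef, ← hβdef]
    ring
  have hMOz : ∀ i j, M i j ∈ Oz := by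
    rw [hMdef]; exact hmain
  have ho1 : 2 * lD α + T * lD β - τ * α - (ν - lD T) * β ∈ Oz := by
    rw [hid1]
    refine add_mem (sub_mem (add_mem (hMOz 0 0) (hMOz 1 1)) (lD_mem_Oz hw11Oz))
      (add_mem (mul_mem hw11Oz (sub_mem (hb1Oz 1 1) (ha1Oz 1 1)))
        (mul_mem hw01Oz (sub_mem (hb1Oz 1 0) (ha1Oz 1 0))))
  have ho2 : T * lD α + (T * T - (D + D)) * lD β - ν * α
      - ((T * ν - D * τ) - T * lD T + lD D) * β ∈ Oz := by
    rw [hid2]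
    refine add_mem (sub_mem (sub_mem (add_mem (add_mem (neg_mem (mul_mem hDOz (hMOz 1 0)))
      (hMOz 0 1)) (mul_mem hTOz (hMOz 1 1))) (lD_mem_Oz hw01Oz))
      (mul_mem hTOz (lD_mem_Oz hw11Oz))) ?_
    refine add_mem (sub_mem (sub_mem (add_mem (neg_mem (mul_mem hDOz
      (mul_mem hw11Oz (hb1Oz 1 0)))) (mul_mem hw01Oz (hb1Oz 1 1)))
      (mul_mem (ha1Oz 0 0) hw01Oz)) (mul_mem (ha1Oz 0 1) hw11Oz)) ?_
    exact mul_mem hTOz (sub_mem (sub_mem (mul_mem hw11Oz (hb1Oz 1 1))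
      (mul_mem (ha1Oz 1 0) hw01Oz)) (mul_mem (ha1Oz 1 1) hw11Oz))
  -- the pole-killing system
  have hEOz : T * T - (D + D + D + D) ∈ Oz :=
    sub_mem (mul_mem hTOz hTOz) (add_mem (add_mem (add_mem hDOz hDOz) hDOz) hDOz)
  have hP00Oz : (T * T - (D + D)) * τ - T * ν ∈ Oz :=
    sub_mem (mul_mem (sub_mem (mul_mem hTOz hTOz) (add_mem hDOz hDOz)) hτOz)
      (mul_mem hTOz hνOz)
  have hP01Oz : (T * T - (D + D)) * (ν - lD T) - T * ((T * ν - D * τ) - T * lD T + lD D) ∈ Oz :=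
    sub_mem (mul_mem (sub_mem (mul_mem hTOz hTOz) (add_mem hDOz hDOz))
        (sub_mem hνOz (lD_mem_Oz hTOz)))
      (mul_mem hTOz (add_mem (sub_mem (sub_mem (mul_mem hTOz hνOz) (mul_mem hDOz hτOz))
        (mul_mem hTOz (lD_mem_Oz hTOz))) (lD_mem_Oz hDOz)))
  have hP10Oz : -(T * τ) + (ν + ν) ∈ Oz :=
    add_mem (neg_mem (mul_mem hTOz hτOz)) (add_mem hνOz hνOz)
  have hρOz : (T * ν - D * τ) - T * lD T + lD D ∈ Oz :=
    add_mem (sub_mem (sub_mem (mul_mem hTOz hνOz) (mul_mem hDOz hτOz))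
      (mul_mem hTOz (lD_mem_Oz hTOz))) (lD_mem_Oz hDOz)
  have hP11Oz : -(T * (ν - lD T)) + (((T * ν - D * τ) - T * lD T + lD D)
      + ((T * ν - D * τ) - T * lD T + lD D)) ∈ Oz :=
    add_mem (neg_mem (mul_mem hTOz (sub_mem hνOz (lD_mem_Oz hTOz)))) (add_mem hρOz hρOz)
  -- trace condition
  have htrP : ((T * T - (D + D)) * τ - T * ν).coeff 0
      + (-(T * (ν - lD T)) + (((T * ν - D * τ) - T * lD T + lD D)
        + ((T * ν - D * τ) - T * lD T + lD D))).coeff 0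
      = -((T * T - (D + D + D + D)).coeff 1) / 2 := by
    have hPsum : ((T * T - (D + D)) * τ - T * ν)
        + (-(T * (ν - lD T)) + (((T * ν - D * τ) - T * lD T + lD D)
          + ((T * ν - D * τ) - T * lD T + lD D)))
        = τ * (T * T - (D + D + D + D)) - (T * lD T - (lD D + lD D)) := by ring
    have hc := congrArg (fun f : K => f.coeff 0) hPsum
    simp only [HahnSeries.coeff_add, HahnSeries.coeff_sub] at hc
    have hτE : (τ * (T * T - (D + D + D + D))).coeff 0 = 0 := by
      rw [oz_mul_coeff_zero hτOz hEOz, hE0, mul_zero]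
    rw [hτE] at hc
    -- value of E₁
    have hE1v : (T * T - (D + D + D + D)).coeff 1
        = (lD T * T).coeff 0 + (T * lD T).coeff 0
          - ((lD D).coeff 0 + (lD D).coeff 0 + (lD D).coeff 0 + (lD D).coeff 0) := by
      have h2 : (lD (T * T - (D + D + D + D))).coeff 0
          = (T * T - (D + D + D + D)).coeff 1 := by
        rw [lD_coeff]; norm_num
      rw [lD_sub, lD_add, lD_add, lD_add, lD_mul] at h2
      rw [← h2]
      simp only [HahnSeries.coeff_add, HahnSeries.coeff_sub]
    have hTT' : (lD T * T).coeff 0 = (T * lD T).coeff 0 := by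
      rw [mul_comm]
    rw [hE1v, hTT']
    simp only [HahnSeries.coeff_add, HahnSeries.coeff_sub]
    linear_combination hc
  -- determinant condition
  have hdetP : ((T * T - (D + D)) * τ - T * ν).coeff 0
        * (-(T * (ν - lD T)) + (((T * ν - D * τ) - T * lD T + lD D)
          + ((T * ν - D * τ) - T * lD T + lD D))).coeff 0
      - ((T * T - (D + D)) * (ν - lD T)
          - T * ((T * ν - D * τ) - T * lD T + lD D)).coeff 0
        * (-(T * τ) + (ν + ν)).coeff 0 = 0 := by
    have hQOz : τ * ((T * ν - D * τ) - T * lD T + lD D) - ν * (ν - lD T) ∈ Oz :=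
      sub_mem (mul_mem hτOz hρOz) (mul_mem hνOz (sub_mem hνOz (lD_mem_Oz hTOz)))
    have hPdet : ((T * T - (D + D)) * τ - T * ν)
          * (-(T * (ν - lD T)) + (((T * ν - D * τ) - T * lD T + lD D)
            + ((T * ν - D * τ) - T * lD T + lD D)))
        - ((T * T - (D + D)) * (ν - lD T) - T * ((T * ν - D * τ) - T * lD T + lD D))
          * (-(T * τ) + (ν + ν))
        = (T * T - (D + D + D + D))
          * (τ * ((T * ν - D * τ) - T * lD T + lD D) - ν * (ν - lD T)) := by ring
    have hc := congrArg (fun f : K => f.coeff 0) hPdet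
    simp only [HahnSeries.coeff_sub] at hc
    rw [oz_mul_coeff_zero hEOz hQOz, hE0, zero_mul,
      oz_mul_coeff_zero hP00Oz hP11Oz, oz_mul_coeff_zero hP01Oz hP10Oz] at hc
    exact hc
  -- apply poleKill
  have hαβOz := poleKill (T * T - (D + D + D + D)) hEOz hE0 hE1
    ((T * T - (D + D)) * τ - T * ν)
    ((T * T - (D + D)) * (ν - lD T) - T * ((T * ν - D * τ) - T * lD T + lD D))
    (-(T * τ) + (ν + ν))
    (-(T * (ν - lD T)) + (((T * ν - D * τ) - T * lD T + lD D)
      + ((T * ν - D * τ) - T * lD T + lD D)))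
    hP00Oz hP01Oz hP10Oz hP11Oz htrP hdetP α β
    ⟨(T * T - (D + D)) * (2 * lD α + T * lD β - τ * α - (ν - lD T) * β)
      - T * (T * lD α + (T * T - (D + D)) * lD β - ν * α
        - ((T * ν - D * τ) - T * lD T + lD D) * β),
      sub_mem (mul_mem (sub_mem (mul_mem hTOz hTOz) (add_mem hDOz hDOz)) ho1)
        (mul_mem hTOz ho2), by ring⟩
    ⟨-(T * (2 * lD α + T * lD β - τ * α - (ν - lD T) * β))
      + ((T * lD α + (T * T - (D + D)) * lD β - ν * α
        - ((T * ν - D * τ) - T * lD T + lD D) * β)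
        + (T * lD α + (T * T - (D + D)) * lD β - ν * α
        - ((T * ν - D * τ) - T * lD T + lD D) * β)),
      add_mem (neg_mem (mul_mem hTOz ho1)) (add_mem ho2 ho2), by ring⟩
  obtain ⟨hαOz, hβOz⟩ := hαβOz
  -- conclude
  intro i j
  fin_cases i <;> fin_cases j
  · exact hαOz
  · rw [show ((⟨0, by omega⟩ : Fin 2)) = (0 : Fin 2) from rfl,
      show ((⟨1, by omega⟩ : Fin 2)) = (1 : Fin 2) from rfl, hs01]
    exact add_mem (neg_mem (mul_mem hDOz hβOz)) hw01Oz
  · exact hβOz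
  · rw [show ((⟨1, by omega⟩ : Fin 2)) = (1 : Fin 2) from rfl, hs11]
    exact add_mem (add_mem hαOz (mul_mem hTOz hβOz)) hw11Oz

-- ### Part V-b : helpers for assembly

lemma cM_zero_mul (P Q : Mhat) : cM 0 (P * Q) = cM 0 P * cM 0 Q := by
  rw [cM_mul, Finset.Nat.antidiagonal_zero, Finset.sum_singleton]

lemma smul_sand1 (a : Khat) (P M : Mhat) : a • (P * M) = P * (a • M) := (Matrix.mul_smul P a M).symm

lemma smul_sand2 (a : Khat) (M Q : Mhat) : a • (M * Q) = (a • M) * Q := (Matrix.smul_mul a M Q).symm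

lemma Msmul_add (a : Khat) (M N : Mhat) : a • (M + N) = a • M + a • N := by
  rw [← Matrix.ext_iff]; intro i j
  show a * (M i j + N i j) = a * M i j + a * N i j
  ring

lemma Msmul_neg (a : Khat) (M : Mhat) : a • (-M) = -(a • M) := by
  rw [← Matrix.ext_iff]; intro i j
  show a * (-(M i j)) = -(a * M i j)
  ring

lemma Msmul_smul (a b : Khat) (M : Mhat) : a • (b • M) = (a * b) • M := by
  rw [← Matrix.ext_iff]; intro i j
  show a * (b * M i j) = (a * b) * M i j
  ring

lemma Mone_smul (M : Mhat) : (1 : Khat) • M = M := by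
  rw [← Matrix.ext_iff]; intro i j
  show (1 : Khat) * M i j = M i j
  rw [one_mul]

theorem stmt5' (t d : PowerSeries ℂ) (hsz : SimpleZero (t ^ 2 - 4 * d))
    (A : Matrix (Fin 2) (Fin 2) Khat) (hA : ∀ i j, MemOhat (A i j))
    (htr : (A.map ev0).trace = HahnSeries.ofPowerSeries ℤ ℂ t)
    (hdet : (A.map ev0).det = HahnSeries.ofPowerSeries ℤ ℂ d)
    (R : Matrix (Fin 2) (Fin 2) Khat) (hR : IsUnit R)
    (hR0 : ∀ i j, (R.map ev0) i j ∈ Oz)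
    (hR0inv : ∃ S : Matrix (Fin 2) (Fin 2) K, (∀ i j, S i j ∈ Oz) ∧
      R.map ev0 * S = 1 ∧ S * R.map ev0 = 1)
    (hgauge : ∀ i j, MemOhat (lamGauge A R i j)) :
    (∀ i j, MemOhat (R i j)) ∧
      ∃ S : Matrix (Fin 2) (Fin 2) Khat, (∀ i j, MemOhat (S i j)) ∧
        R * S = 1 ∧ S * R = 1 := by
  classical
  have hdetu : IsUnit R.det := (Matrix.isUnit_iff_isUnit_det R).mp hR
  have hRRi : R * R⁻¹ = 1 := Matrix.mul_nonsing_inv R hdetu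
  set B := lamGauge A R with hBdef
  have hBOh : MOh B := hgauge
  have hAOh : MOh A := hA
  -- the master equation
  have hstar : (PowerSeries.X : Khat) • (R.map pD) = R * B - A * R := by
    have h1 : R * B = A * R + (PowerSeries.X : Khat) • (R.map pD) := by
      rw [hBdef]
      show R * (R⁻¹ * A * R + _ • (R⁻¹ * R.map pD)) = _
      have c1 : R * (R⁻¹ * A * R) = A * R := by
        rw [← Matrix.mul_assoc, ← Matrix.mul_assoc, hRRi, Matrix.one_mul]
      have c2 : R * (R⁻¹ * R.map pD) = R.map pD := by
        rw [← Matrix.mul_assoc, hRRi, Matrix.one_mul]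
      rw [Matrix.mul_add, ← smul_sand1, c1, c2]
    rw [h1, add_sub_cancel_left]
  -- λ = 0 data
  obtain ⟨Ri0, hRi0Oz, hRRi0, hRi0R⟩ := hR0inv
  have hev0coeff : ∀ f : Khat, ev0 f = PowerSeries.coeff (R := K) 0 f := fun f => by
    rw [PowerSeries.coeff_zero_eq_constantCoeff]; rfl
  have hmapev0 : ∀ P : Mhat, P.map ev0 = cM 0 P := fun P => by
    rw [← Matrix.ext_iff]; intro i j
    rw [Matrix.map_apply, cM_apply, hev0coeff]
  have hA0Oz : ∀ i j, (A.map ev0) i j ∈ Oz := fun i j => by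
    rw [Matrix.map_apply, hev0coeff]
    exact hA i j 0
  set T := HahnSeries.ofPowerSeries ℤ ℂ t with hTdef
  set D := HahnSeries.ofPowerSeries ℤ ℂ d with hDdef
  have hTOz : T ∈ Oz := ⟨t, rfl⟩
  have hDOz : D ∈ Oz := ⟨d, rfl⟩
  have hEmap : T * T - (D + D + D + D)
      = HahnSeries.ofPowerSeries ℤ ℂ (t * t - (d + d + d + d)) := by
    rw [hTdef, hDdef, map_sub, map_mul, map_add, map_add, map_add]
  have hszcoeff : ∀ n : ℕ, (T * T - (D + D + D + D)).coeff (n : ℤ)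
      = PowerSeries.coeff (R := ℂ) n (t ^ 2 - 4 * d) := by
    intro n
    rw [hEmap, HahnSeries.ofPowerSeries_apply_coeff,
      show t * t - (d + d + d + d) = t ^ 2 - 4 * d by ring]
  have hE0 : (T * T - (D + D + D + D)).coeff 0 = 0 := by
    have := (hszcoeff 0).trans hsz.1
    exact_mod_cast this
  have hE1 : (T * T - (D + D + D + D)).coeff 1 ≠ 0 := by
    intro hc
    apply hsz.2
    rw [← hszcoeff 1]
    exact_mod_cast hc
  -- B at λ = 0
  have hB0 : B.map ev0 = Ri0 * (A.map ev0) * (R.map ev0) := by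
    rw [hBdef]
    show (R⁻¹ * A * R + _ • (R⁻¹ * R.map pD)).map ev0 = _
    rw [Matrix.map_add _ (fun a b => map_add ev0 a b), Matrix.map_mul (f := ev0),
      Matrix.map_mul (f := ev0)]
    have hz : (((PowerSeries.X : Khat) • (R⁻¹ * R.map pD)).map ev0) = 0 := by
      rw [← Matrix.ext_iff]; intro i j
      rw [Matrix.map_apply, Matrix.smul_apply, smul_eq_mul]
      show ev0 (PowerSeries.X * _) = (0 : Mhat).map ev0 i j
      rw [map_mul]
      have : ev0 (PowerSeries.X : Khat) = 0 := PowerSeries.constantCoeff_X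
      rw [this, zero_mul]
      simp
    rw [hz, add_zero]
    have hinv : (R⁻¹).map ev0 = Ri0 := by
      have h1 : (R.map ev0) * ((R⁻¹).map ev0) = 1 := by
        rw [← Matrix.map_mul (f := ev0), hRRi,
          Matrix.map_one ev0 (map_zero ev0) (map_one ev0)]
      calc (R⁻¹).map ev0 = 1 * (R⁻¹).map ev0 := (Matrix.one_mul _).symm
        _ = (Ri0 * R.map ev0) * (R⁻¹).map ev0 := by rw [hRi0R]
        _ = Ri0 * ((R.map ev0) * (R⁻¹).map ev0) := by rw [Matrix.mul_assoc]
        _ = Ri0 := by rw [h1, Matrix.mul_one]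
    rw [hinv]
  have hB0Oz : ∀ i j, (B.map ev0) i j ∈ Oz := by
    rw [hB0]
    exact matOz_mul (matOz_mul hRi0Oz hA0Oz) hR0
  have htrB0 : (B.map ev0).trace = T := by
    rw [hB0, Matrix.trace_mul_cycle, hRRi0, Matrix.one_mul, htr]
  have hdetB0 : (B.map ev0).det = D := by
    rw [hB0, Matrix.det_mul, Matrix.det_mul]
    have h1 : Ri0.det * (R.map ev0).det = 1 := by
      rw [← Matrix.det_mul, hRi0R, Matrix.det_one]
    calc Ri0.det * (A.map ev0).det * (R.map ev0).det
        = (Ri0.det * (R.map ev0).det) * (A.map ev0).det := by ring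
      _ = (A.map ev0).det := by rw [h1, one_mul]
      _ = D := hdet
  -- companion forms
  have h4 : ∀ x y : K, x * x - 4 * y = x * x - (y + y + y + y) := fun x y => by ring
  have hE1A : ((A.map ev0).trace * (A.map ev0).trace - 4 * (A.map ev0).det).coeff 1 ≠ 0 := by
    rw [htr, hdet, h4]; exact hE1
  have hE1B : ((B.map ev0).trace * (B.map ev0).trace - 4 * (B.map ev0).det).coeff 1 ≠ 0 := by
    rw [htrB0, hdetB0, h4]; exact hE1
  obtain ⟨G, Gi, hGOz, hGiOz, hGGi, hGiG, hAG⟩ := companionize (A.map ev0) hA0Oz hE1A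
  obtain ⟨H, Hi, hHOz, hHiOz, hHHi, hHiH, hBH⟩ := companionize (B.map ev0) hB0Oz hE1B
  rw [htr, hdet] at hAG
  rw [htrB0, hdetB0] at hBH
  -- lift to Khat
  have hCMGGi : CM G * CM Gi = 1 := by rw [← CM_mul, hGGi, CM_one]
  have hCMGiG : CM Gi * CM G = 1 := by rw [← CM_mul, hGiG, CM_one]
  have hCMHHi : CM H * CM Hi = 1 := by rw [← CM_mul, hHHi, CM_one]
  have hCMHiH : CM Hi * CM H = 1 := by rw [← CM_mul, hHiH, CM_one]
  set S := CM Gi * (R * CM H) with hSdef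
  set At := CM Gi * (A * CM G) + (PowerSeries.X : Khat) • (CM Gi * mpD (CM G)) with hAtdef
  set Bt := CM Hi * (B * CM H) + (PowerSeries.X : Khat) • (CM Hi * mpD (CM H)) with hBtdef
  have hmpdGi : mpD (CM Gi) = -(CM Gi * (mpD (CM G) * CM Gi)) := by
    have h0 : mpD (CM Gi * CM G) = 0 := by rw [hCMGiG, mpD_one]
    rw [mpD_mul] at h0
    have h1 : mpD (CM Gi) * CM G = -(CM Gi * mpD (CM G)) := eq_neg_of_add_eq_zero_left h0
    calc mpD (CM Gi) = mpD (CM Gi) * (CM G * CM Gi) := by rw [hCMGGi, Matrix.mul_one]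
      _ = (mpD (CM Gi) * CM G) * CM Gi := by rw [Matrix.mul_assoc]
      _ = (-(CM Gi * mpD (CM G))) * CM Gi := by rw [h1]
      _ = -(CM Gi * (mpD (CM G) * CM Gi)) := by rw [Matrix.neg_mul, Matrix.mul_assoc]
  have hXmpDR : (PowerSeries.X : Khat) • mpD R = R * B - A * R := hstar
  have hstar2 : (PowerSeries.X : Khat) • mpD S = S * Bt - At * S := by
    have hcolH : ∀ P : Mhat, CM H * (CM Hi * P) = P := fun P => by
      rw [← Matrix.mul_assoc, hCMHHi, Matrix.one_mul]
    have hcolG : ∀ P : Mhat, CM G * (CM Gi * P) = P := fun P => by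
      rw [← Matrix.mul_assoc, hCMGGi, Matrix.one_mul]
    have hT1 : (CM Gi * (R * CM H)) * (CM Hi * (B * CM H)) = CM Gi * ((R * B) * CM H) := by
      simp only [Matrix.mul_assoc, hcolH]
    have hT2 : (CM Gi * (R * CM H)) * (CM Hi * mpD (CM H)) = CM Gi * (R * mpD (CM H)) := by
      simp only [Matrix.mul_assoc, hcolH]
    have hT3 : (CM Gi * (A * CM G)) * (CM Gi * (R * CM H)) = CM Gi * ((A * R) * CM H) := by
      simp only [Matrix.mul_assoc, hcolG]
    have hT4 : (CM Gi * mpD (CM G)) * (CM Gi * (R * CM H))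
        = CM Gi * ((mpD (CM G) * CM Gi) * (R * CM H)) := by
      simp only [Matrix.mul_assoc]
    have hRHS : S * Bt - At * S
        = CM Gi * ((R * B) * CM H) + (PowerSeries.X : Khat) • (CM Gi * (R * mpD (CM H)))
          - (CM Gi * ((A * R) * CM H)
            + (PowerSeries.X : Khat) • (CM Gi * ((mpD (CM G) * CM Gi) * (R * CM H)))) := by
      rw [hBtdef, hAtdef, Matrix.mul_add, Matrix.add_mul,
        ← smul_sand1 (PowerSeries.X : Khat) S (CM Hi * mpD (CM H)),
        ← smul_sand2 (PowerSeries.X : Khat) (CM Gi * mpD (CM G)) S, hSdef,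
        hT1, hT2, hT3, hT4]
    have hLHS : (PowerSeries.X : Khat) • mpD S
        = -((PowerSeries.X : Khat) • (CM Gi * ((mpD (CM G) * CM Gi) * (R * CM H))))
          + (CM Gi * ((R * B) * CM H) - CM Gi * ((A * R) * CM H)
            + (PowerSeries.X : Khat) • (CM Gi * (R * mpD (CM H)))) := by
      rw [hSdef]
      rw [show mpD (CM Gi * (R * CM H))
          = mpD (CM Gi) * (R * CM H) + CM Gi * (mpD R * CM H + R * mpD (CM H)) by
        rw [mpD_mul, mpD_mul]]
      rw [Matrix.mul_add, Msmul_add, Msmul_add]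
      rw [hmpdGi, Matrix.neg_mul, Matrix.mul_assoc, Msmul_neg]
      rw [smul_sand1 (PowerSeries.X : Khat) (CM Gi) (mpD R * CM H),
        smul_sand2 (PowerSeries.X : Khat) (mpD R) (CM H), hXmpDR,
        Matrix.sub_mul, Matrix.mul_sub]
    rw [hLHS, hRHS]
    abel
  -- the λ-coefficient equations
  have hEqn : ∀ n : ℕ, (cM n S).map lD
      = (∑ ij ∈ Finset.HasAntidiagonal.antidiagonal (n + 1), cM ij.1 S * cM ij.2 Bt)
        - (∑ ij ∈ Finset.HasAntidiagonal.antidiagonal (n + 1), cM ij.1 At * cM ij.2 S) := by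
    intro n
    have h := congrArg (cM (n + 1)) hstar2
    rw [cM_smulX, cM_mpD, cM_sub, cM_mul (n+1) S Bt, cM_mul (n+1) At S] at h
    exact h
  -- λ = 0 values
  have hAt0 : cM 0 At = Nmat T D := by
    rw [hAtdef, cM_add, cM_smulX_zero, add_zero, cM_zero_mul (CM Gi) (A * CM G),
      cM_zero_mul A (CM G), cM_CM_zero, cM_CM_zero, ← hmapev0, hAG,
      ← Matrix.mul_assoc, hGiG, Matrix.one_mul]
  have hBt0 : cM 0 Bt = Nmat T D := by
    rw [hBtdef, cM_add, cM_smulX_zero, add_zero, cM_zero_mul (CM Hi) (B * CM H),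
      cM_zero_mul B (CM H), cM_CM_zero, cM_CM_zero, ← hmapev0, hBH,
      ← Matrix.mul_assoc, hHiH, Matrix.one_mul]
  have hS0 : ∀ i j, cM 0 S i j ∈ Oz := by
    rw [hSdef]
    rw [show cM 0 (CM Gi * (R * CM H)) = Gi * (cM 0 R * H) by
      rw [cM_zero_mul (CM Gi) (R * CM H), cM_zero_mul R (CM H), cM_CM_zero, cM_CM_zero]]
    exact matOz_mul hGiOz (matOz_mul (by rw [← hmapev0]; exact hR0) hHOz)
  -- MemOhat of the coefficients
  have hmpdGOh : MOh (mpD (CM G)) := by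
    rw [mpD_CM]
    exact MOh_CM (fun i j => lD_mem_Oz (hGOz i j))
  have hmpdHOh : MOh (mpD (CM H)) := by
    rw [mpD_CM]
    exact MOh_CM (fun i j => lD_mem_Oz (hHOz i j))
  have hAtOh : MOh At := by
    rw [hAtdef]
    exact MOh_add (MOh_mul (MOh_CM hGiOz) (MOh_mul hAOh (MOh_CM hGOz)))
      (MOh_smulX (MOh_mul (MOh_CM hGiOz) hmpdGOh))
  have hBtOh : MOh Bt := by
    rw [hBtdef]
    exact MOh_add (MOh_mul (MOh_CM hHiOz) (MOh_mul hBOh (MOh_CM hHOz)))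
      (MOh_smulX (MOh_mul (MOh_CM hHiOz) hmpdHOh))
  -- the main induction
  have hSOz := mainInduction T D hTOz hDOz hE0 hE1 At Bt S hAtOh hBtOh hAt0 hBt0 hS0 hEqn
  have hSOh : MOh S := fun i j n => hSOz n i j
  -- recover R
  have hcolG : ∀ P : Mhat, CM G * (CM Gi * P) = P := fun P => by
    rw [← Matrix.mul_assoc, hCMGGi, Matrix.one_mul]
  have hRfact : CM G * (S * CM Hi) = R := by
    rw [hSdef]
    simp only [Matrix.mul_assoc]
    rw [hCMHHi, Matrix.mul_one, ← Matrix.mul_assoc, hCMGGi, Matrix.one_mul]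
  have hROh : MOh R := by
    rw [← hRfact]
    exact MOh_mul (MOh_CM hGOz) (MOh_mul hSOh (MOh_CM hHiOz))
  refine ⟨hROh, ?_⟩
  -- invertibility over Ohat
  have hdetOh : MemOhat R.det := by
    rw [Matrix.det_fin_two]
    exact memOhat_sub (memOhat_mul (hROh 0 0) (hROh 1 1)) (memOhat_mul (hROh 0 1) (hROh 1 0))
  obtain ⟨u, hu⟩ := hdetu
  have hfg : R.det * ↑u⁻¹ = 1 := by
    rw [← hu]
    exact u.mul_inv
  have hdet0 : ∃ g0 ∈ Oz, g0 * PowerSeries.constantCoeff (R := K) R.det = 1 := by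
    have h2 : (R.map ev0).det = PowerSeries.constantCoeff (R := K) R.det :=
      (RingHom.map_det ev0 R).symm
    have h1 : Ri0.det * (R.map ev0).det = 1 := by
      rw [← Matrix.det_mul, hRi0R, Matrix.det_one]
    refine ⟨Ri0.det, ?_, by rw [← h2]; exact h1⟩
    rw [Matrix.det_fin_two]
    exact sub_mem (mul_mem (hRi0Oz 0 0) (hRi0Oz 1 1)) (mul_mem (hRi0Oz 0 1) (hRi0Oz 1 0))
  obtain ⟨g0, hg0Oz, hg01⟩ := hdet0
  have hgOh : MemOhat (↑u⁻¹ : Khat) := memOhat_inv hdetOh hfg hg0Oz hg01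
  refine ⟨(↑u⁻¹ : Khat) • R.adjugate, ?_, ?_, ?_⟩
  · intro i j
    rw [Matrix.smul_apply, smul_eq_mul]
    apply memOhat_mul hgOh
    rw [Matrix.adjugate_fin_two]
    fin_cases i <;> fin_cases j <;> simp
    · exact hROh 1 1
    · exact memOhat_neg (hROh 0 1)
    · exact memOhat_neg (hROh 1 0)
    · exact hROh 0 0
  · rw [← smul_sand1, Matrix.mul_adjugate, Msmul_smul, ← hu,
      show (↑u⁻¹ : Khat) * ↑u = 1 from u.inv_mul, Mone_smul]
  · rw [← smul_sand2, Matrix.adjugate_mul, Msmul_smul, ← hu,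
      show (↑u⁻¹ : Khat) * ↑u = 1 from u.inv_mul, Mone_smul]

/-- (Lemma on λ-gauge transforms.) If `A ∈ M₂(ℂ[[z,λ]])` with
`tr A(z,0) = t`, `det A(z,0) = d`, where `t² - 4d` has a simple zero at `z = 0`, and
`R ∈ M₂(ℂ((z))[[λ]])` is invertible with `R(z,0) ∈ M₂(ℂ[[z]])` invertible over `ℂ[[z]]`,
and if `Gauge_λ(A,R) ∈ M₂(ℂ[[z,λ]])`, then `R ∈ M₂(ℂ[[z,λ]])` and `R` is invertible
over `ℂ[[z,λ]]`. -/
theorem stmt5 (t d : PowerSeries ℂ) (hsz : SimpleZero (t ^ 2 - 4 * d))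
    (A : Matrix (Fin 2) (Fin 2) Khat) (hA : ∀ i j, MemOhat (A i j))
    (htr : (A.map ev0).trace = HahnSeries.ofPowerSeries ℤ ℂ t)
    (hdet : (A.map ev0).det = HahnSeries.ofPowerSeries ℤ ℂ d)
    (R : Matrix (Fin 2) (Fin 2) Khat) (hR : IsUnit R)
    (hR0 : ∀ i j, (R.map ev0) i j ∈ Oz)
    (hR0inv : ∃ S : Matrix (Fin 2) (Fin 2) K, (∀ i j, S i j ∈ Oz) ∧
      R.map ev0 * S = 1 ∧ S * R.map ev0 = 1)
    (hgauge : ∀ i j, MemOhat (lamGauge A R i j)) :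
    (∀ i j, MemOhat (R i j)) ∧
      ∃ S : Matrix (Fin 2) (Fin 2) Khat, (∀ i j, MemOhat (S i j)) ∧
        R * S = 1 ∧ S * R = 1 := by
  exact stmt5' t d hsz A hA htr hdet R hR hR0 hR0inv hgauge

end
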